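/- Let S be a finite set of points of ℝ^n all of norm r > 0 and with at least two elements. Define, for β > 0 and y ∈ ℝ^n: the weights π(x|y) := exp(−β‖y−x‖²/2) / Σ_{x'∈S} exp(−β‖y−x'‖²/2); the barycenter b(y) := Σ_{x∈S} π(x|y) x; the centered points x̃(x,y) := x − b(y); the field F(y) := β Σ_{x∈S} π(x|y) ⟨y−x, x̃(x,y)⟩ x̃(x,y); the barycenter x̄_*(y) of S_*(y); and A_*(y) := |S_*(y)|^{−1} Σ_{x∈S_*(y)} ⟨x̄_*(y), x − x̄_*(y)⟩ (x − x̄_*(y)). Then there exists a constant C > 0, depending only on the cardinality of S and on r, such that for every β > 0 and every y ∈ ℝ^n with S_*(y) ≠ S, one has ‖F(y) − β A_*(y)‖ ≤ C β (‖y‖ + r) exp(−β c(y)). -/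

import Mathlib

open scoped Classical BigOperators RealInnerProductSpace

noncomputable section

/-- `dist(y,S) = min_{x∈S} ‖y−x‖` (as the infimum of a finite nonempty set of reals). -/
def distS {n : ℕ} (S : Finset (EuclideanSpace ℝ (Fin n))) (y : EuclideanSpace ℝ (Fin n)) : ℝ :=
  sInf ((fun x => ‖y - x‖) '' ↑S)

/-- `S_*(y)`, the set of closest points of `S` to `y`. -/
def Sstar {n : ℕ} (S : Finset (EuclideanSpace ℝ (Fin n))) (y : EuclideanSpace ℝ (Fin n)) :
    Finset (EuclideanSpace ℝ (Fin n)) :=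
  S.filter fun x => ‖y - x‖ = distS S y

/-- The energy gap `c(y) = min_{x ∈ S∖S_*(y)} ‖y−x‖²/2 − dist(y,S)²/2`. -/
def gap {n : ℕ} (S : Finset (EuclideanSpace ℝ (Fin n))) (y : EuclideanSpace ℝ (Fin n)) : ℝ :=
  sInf ((fun x => ‖y - x‖ ^ 2 / 2) '' (↑S \ ↑(Sstar S y))) - distS S y ^ 2 / 2

/-- The Gibbs (softmax) weight `π(x|y) = exp(−β‖y−x‖²/2) / ∑_{x'∈S} exp(−β‖y−x'‖²/2)`. -/
def gibbsW {n : ℕ} (S : Finset (EuclideanSpace ℝ (Fin n))) (β : ℝ)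
    (x y : EuclideanSpace ℝ (Fin n)) : ℝ :=
  Real.exp (-β * ‖y - x‖ ^ 2 / 2) / ∑ x' ∈ S, Real.exp (-β * ‖y - x'‖ ^ 2 / 2)

/-- The Gibbs barycenter `b(y) = ∑_{x∈S} π(x|y) x`. -/
def gibbsBary {n : ℕ} (S : Finset (EuclideanSpace ℝ (Fin n))) (β : ℝ)
    (y : EuclideanSpace ℝ (Fin n)) : EuclideanSpace ℝ (Fin n) :=
  ∑ x ∈ S, gibbsW S β x y • x

/-- The centered point `x̃(x,y) = x − b(y)`. -/
def xtil {n : ℕ} (S : Finset (EuclideanSpace ℝ (Fin n))) (β : ℝ)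
    (x y : EuclideanSpace ℝ (Fin n)) : EuclideanSpace ℝ (Fin n) :=
  x - gibbsBary S β y

/-- The field `F(y) = β ∑_{x∈S} π(x|y) ⟪y−x, x̃(x,y)⟫ x̃(x,y)`. -/
def forceF {n : ℕ} (S : Finset (EuclideanSpace ℝ (Fin n))) (β : ℝ)
    (y : EuclideanSpace ℝ (Fin n)) : EuclideanSpace ℝ (Fin n) :=
  β • ∑ x ∈ S, (gibbsW S β x y * ⟪y - x, xtil S β x y⟫) • xtil S β x y

/-- The barycenter `x̄_*(y)` of the set of closest points `S_*(y)`. -/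
def baryStar {n : ℕ} (S : Finset (EuclideanSpace ℝ (Fin n)))
    (y : EuclideanSpace ℝ (Fin n)) : EuclideanSpace ℝ (Fin n) :=
  ((Sstar S y).card : ℝ)⁻¹ • ∑ x ∈ Sstar S y, x

/-- `A_*(y) = |S_*(y)|⁻¹ ∑_{x∈S_*(y)} ⟪x̄_*(y), x − x̄_*(y)⟫ (x − x̄_*(y))`. -/
def Astar {n : ℕ} (S : Finset (EuclideanSpace ℝ (Fin n)))
    (y : EuclideanSpace ℝ (Fin n)) : EuclideanSpace ℝ (Fin n) :=
  ((Sstar S y).card : ℝ)⁻¹ •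
    ∑ x ∈ Sstar S y, ⟪baryStar S y, x - baryStar S y⟫ • (x - baryStar S y)

lemma aux_pert {α : Type*} {E : Type*} [NormedAddCommGroup E] [NormedSpace ℝ E]
    (s : Finset α) (f g : α → ℝ) (v w : α → E) :
    ‖∑ x ∈ s, f x • v x - ∑ x ∈ s, g x • w x‖ ≤
      ∑ x ∈ s, (|f x - g x| * ‖v x‖ + |g x| * ‖v x - w x‖) := by
  rw [← Finset.sum_sub_distrib]
  refine (norm_sum_le _ _).trans (Finset.sum_le_sum fun x hx => ?_)
  have h : f x • v x - g x • w x = (f x - g x) • v x + g x • (v x - w x) := by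
    rw [sub_smul, smul_sub]; abel
  rw [h]
  refine (norm_add_le _ _).trans ?_
  rw [norm_smul, norm_smul, Real.norm_eq_abs, Real.norm_eq_abs]

lemma sum_ite_mem_subset {α : Type*} {M : Type*} [AddCommMonoid M] {s t : Finset α}
    {_ : DecidablePred (· ∈ t)} (h : t ⊆ s) (f : α → M) :
    ∑ x ∈ s, (if x ∈ t then f x else 0) = ∑ x ∈ t, f x := by
  rw [← Finset.sum_subset h (fun x _ hx => if_neg hx)]
  exact Finset.sum_congr rfl fun x hx => if_pos hx

set_option maxHeartbeats 2000000 in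
/-- Lemma 6.7(b) / eq. (65) of the paper. For a finite set `S ⊂ ℝ^n` of
points of common norm `r > 0` with at least two elements, there is a constant `C > 0`,
depending only on the cardinality of `S` and on `r`, such that for every `β > 0` and every
`y` with `S_*(y) ≠ S`, one has `‖F(y) − β A_*(y)‖ ≤ C β (‖y‖ + r) exp(−β c(y))`. -/
theorem statement5 (N : ℕ) (hN : 2 ≤ N) (r : ℝ) (hr : 0 < r) :
    ∃ C > (0 : ℝ), ∀ (n : ℕ) (S : Finset (EuclideanSpace ℝ (Fin n))),
      S.card = N → (∀ x ∈ S, ‖x‖ = r) →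
        ∀ β : ℝ, 0 < β → ∀ y : EuclideanSpace ℝ (Fin n), Sstar S y ≠ S →
          ‖forceF S β y - β • Astar S y‖
            ≤ C * β * (‖y‖ + r) * Real.exp (-β * gap S y) := by

  have hNR : (2:ℝ) ≤ (N:ℝ) := by exact_mod_cast hN
  refine ⟨16 * N * r ^ 2, by nlinarith, ?_⟩
  intro n S hcard hnorm β hβ y hne
  have hS_ne : S.Nonempty := Finset.card_pos.mp (by rw [hcard]; omega)
  -- distance facts
  have himg_fin : ((fun x => ‖y - x‖) '' (S : Set (EuclideanSpace ℝ (Fin n)))).Finite :=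
    S.finite_toSet.image _
  have himg_ne : ((fun x => ‖y - x‖) '' (S : Set (EuclideanSpace ℝ (Fin n)))).Nonempty :=
    ⟨‖y - hS_ne.choose‖, ⟨hS_ne.choose, hS_ne.choose_spec, rfl⟩⟩
  obtain ⟨x₀, hx₀S, hx₀⟩ := himg_ne.csInf_mem himg_fin
  have hm_le : ∀ x ∈ S, distS S y ≤ ‖y - x‖ := fun x hx =>
    csInf_le himg_fin.bddBelow ⟨x, hx, rfl⟩
  have hm_nonneg : 0 ≤ distS S y := by
    have h := hx₀
    simp only [] at h
    rw [distS, ← h]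
    positivity
  have hK_sub : Sstar S y ⊆ S := Finset.filter_subset _ _
  have hx₀K : x₀ ∈ Sstar S y := Finset.mem_filter.mpr ⟨hx₀S, hx₀⟩
  have hK_ne : (Sstar S y).Nonempty := ⟨x₀, hx₀K⟩
  set k := (Sstar S y).card with hk_def
  have hk_pos : 0 < k := Finset.card_pos.mpr hK_ne
  have hk_ne : (k:ℝ) ≠ 0 := Nat.cast_ne_zero.mpr hk_pos.ne'
  have hk_one : (1:ℝ) ≤ (k:ℝ) := by exact_mod_cast hk_pos
  have hK_eq : ∀ x ∈ Sstar S y, ‖y - x‖ = distS S y := fun x hx => (Finset.mem_filter.mp hx).2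
  -- gap fact
  have hgap : ∀ x ∈ S, x ∉ Sstar S y → gap S y + distS S y ^ 2 / 2 ≤ ‖y - x‖ ^ 2 / 2 := by
    intro x hx hnx
    have h1 : sInf ((fun x => ‖y - x‖ ^ 2 / 2) '' ((S : Set _) \ (Sstar S y : Set _)))
        ≤ ‖y - x‖ ^ 2 / 2 :=
      csInf_le ((S.finite_toSet.diff).image _).bddBelow
        ⟨x, ⟨hx, by simpa using hnx⟩, rfl⟩
    unfold gap
    linarith
  -- weights
  set W : EuclideanSpace ℝ (Fin n) → ℝ := fun x => Real.exp (-β * ‖y - x‖ ^ 2 / 2) with hW_def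
  set D := ∑ x' ∈ S, W x' with hD_def
  have hW_pos : ∀ x, 0 < W x := fun x => Real.exp_pos _
  have hD_pos : 0 < D := Finset.sum_pos (fun x _ => hW_pos x) hS_ne
  have hπ_eq : ∀ x, gibbsW S β x y = W x / D := fun x => rfl
  set e0 := Real.exp (-β * distS S y ^ 2 / 2) with he0_def
  have he0_pos : 0 < e0 := Real.exp_pos _
  have hWK : ∀ x ∈ Sstar S y, W x = e0 := by
    intro x hx; simp only [hW_def, he0_def, hK_eq x hx]
  have hKsum : ∑ x ∈ Sstar S y, W x = k * e0 := by
    rw [Finset.sum_congr rfl hWK, Finset.sum_const, nsmul_eq_mul]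
  have hke0_le : (k:ℝ) * e0 ≤ D :=
    hKsum ▸ Finset.sum_le_sum_of_subset_of_nonneg hK_sub (fun x _ _ => (hW_pos x).le)
  have he0_le_D : e0 ≤ D := le_trans (by nlinarith) hke0_le
  set ε := Real.exp (-β * gap S y) with hε_def
  have hε_pos : 0 < ε := Real.exp_pos _
  have hWoff : ∀ x ∈ S, x ∉ Sstar S y → W x ≤ ε * e0 := by
    intro x hx hnx
    rw [hε_def, he0_def, hW_def, ← Real.exp_add]
    apply Real.exp_le_exp.mpr
    have h := hgap x hx hnx
    nlinarith
  -- uniform weights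
  set u : EuclideanSpace ℝ (Fin n) → ℝ := fun x => if x ∈ Sstar S y then (k:ℝ)⁻¹ else 0
    with hu_def
  have hu_nonneg : ∀ x, 0 ≤ u x := by
    intro x; rw [hu_def]; dsimp only; split <;> positivity
  have hu_sum : ∑ x ∈ S, u x = 1 := by
    rw [hu_def]
    rw [sum_ite_mem_subset hK_sub (fun _ => (k:ℝ)⁻¹), Finset.sum_const, nsmul_eq_mul,
      mul_inv_cancel₀ hk_ne]
  have hπ_nonneg : ∀ x, 0 ≤ gibbsW S β x y := fun x => by
    rw [hπ_eq]; exact div_nonneg (hW_pos x).le hD_pos.le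
  have hπ_sum : ∑ x ∈ S, gibbsW S β x y = 1 := by
    simp only [hπ_eq]
    rw [← Finset.sum_div, div_self hD_pos.ne']
  -- sum of |π - u|
  have hcard_sdiff : ((S \ Sstar S y).card : ℝ) ≤ (N:ℝ) := by
    exact_mod_cast (hcard ▸ Finset.card_le_card (Finset.sdiff_subset) : (S \ Sstar S y).card ≤ N)
  have hsdiffW : ∑ x ∈ S \ Sstar S y, W x ≤ (N:ℝ) * (ε * e0) := by
    calc ∑ x ∈ S \ Sstar S y, W x ≤ ∑ _x ∈ S \ Sstar S y, ε * e0 :=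
          Finset.sum_le_sum fun x hx => by
            obtain ⟨hxS, hxn⟩ := Finset.mem_sdiff.mp hx
            exact hWoff x hxS hxn
      _ = ((S \ Sstar S y).card : ℝ) * (ε * e0) := by rw [Finset.sum_const, nsmul_eq_mul]
      _ ≤ (N:ℝ) * (ε * e0) := by
          apply mul_le_mul_of_nonneg_right hcard_sdiff (by positivity)
  have hDsplit : D - (k:ℝ) * e0 = ∑ x ∈ S \ Sstar S y, W x := by
    have := Finset.sum_sdiff (f := W) hK_sub
    rw [hD_def, ← this, hKsum]; ring
  have habs : ∑ x ∈ S, |gibbsW S β x y - u x| ≤ 2 * (N:ℝ) * ε := by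
    rw [← Finset.sum_sdiff (f := fun x => |gibbsW S β x y - u x|) hK_sub]
    have h1 : ∑ x ∈ S \ Sstar S y, |gibbsW S β x y - u x| ≤ (N:ℝ) * ε := by
      calc ∑ x ∈ S \ Sstar S y, |gibbsW S β x y - u x| ≤ ∑ _x ∈ S \ Sstar S y, ε := by
            apply Finset.sum_le_sum
            intro x hx
            obtain ⟨hxS, hxn⟩ := Finset.mem_sdiff.mp hx
            rw [hu_def]
            simp only [if_neg hxn, sub_zero]
            rw [abs_of_nonneg (hπ_nonneg x), hπ_eq]
            calc W x / D ≤ (ε * e0) / e0 :=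
                  div_le_div₀ (by positivity) (hWoff x hxS hxn) he0_pos he0_le_D
              _ = ε := by field_simp
        _ = ((S \ Sstar S y).card : ℝ) * ε := by rw [Finset.sum_const, nsmul_eq_mul]
        _ ≤ (N:ℝ) * ε := mul_le_mul_of_nonneg_right hcard_sdiff hε_pos.le
    have h2 : ∑ x ∈ Sstar S y, |gibbsW S β x y - u x| ≤ (N:ℝ) * ε := by
      have hfrac : e0 / D ≤ (k:ℝ)⁻¹ := by
        rw [div_le_iff₀ hD_pos, inv_mul_eq_div, le_div_iff₀ (by positivity : (0:ℝ) < (k:ℝ))]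
        linarith [hke0_le]
      have heach : ∀ x ∈ Sstar S y, |gibbsW S β x y - u x| = (k:ℝ)⁻¹ - e0 / D := by
        intro x hx
        rw [hπ_eq, hWK x hx, hu_def]
        simp only [if_pos hx]
        rw [abs_sub_comm, abs_of_nonneg (by linarith)]
      rw [Finset.sum_congr rfl heach, Finset.sum_const, nsmul_eq_mul]
      have hcalc : (k:ℝ) * ((k:ℝ)⁻¹ - e0 / D) = (D - (k:ℝ) * e0) / D := by
        field_simp
      rw [hcalc]
      calc (D - (k:ℝ) * e0) / D ≤ ((N:ℝ) * (ε * e0)) / e0 :=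
            div_le_div₀ (by positivity) (by rw [hDsplit]; exact hsdiffW) he0_pos he0_le_D
        _ = (N:ℝ) * ε := by field_simp
    linarith
  -- barycenter facts
  set b := gibbsBary S β y with hb_def
  set bb := baryStar S y with hbb_def
  have hb_norm : ‖b‖ ≤ r := by
    rw [hb_def]
    calc ‖∑ x ∈ S, gibbsW S β x y • x‖ ≤ ∑ x ∈ S, ‖gibbsW S β x y • x‖ := norm_sum_le _ _
      _ = ∑ x ∈ S, gibbsW S β x y * r := by
          refine Finset.sum_congr rfl fun x hx => ?_
          rw [norm_smul, Real.norm_eq_abs, abs_of_nonneg (hπ_nonneg x), hnorm x hx]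
      _ = r := by rw [← Finset.sum_mul, hπ_sum, one_mul]
  have hbar_eq : bb = ∑ x ∈ S, u x • x := by
    have h : ∀ x, u x • x = (if x ∈ Sstar S y then (k:ℝ)⁻¹ • x else 0) := by
      intro x; rw [hu_def]; dsimp only; rw [ite_smul, zero_smul]
    rw [Finset.sum_congr rfl fun x _ => h x, sum_ite_mem_subset hK_sub, hbb_def, baryStar,
      Finset.smul_sum]
  have hbb_norm : ‖bb‖ ≤ r := by
    rw [hbar_eq]
    calc ‖∑ x ∈ S, u x • x‖ ≤ ∑ x ∈ S, ‖u x • x‖ := norm_sum_le _ _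
      _ = ∑ x ∈ S, u x * r := by
          refine Finset.sum_congr rfl fun x hx => ?_
          rw [norm_smul, Real.norm_eq_abs, abs_of_nonneg (hu_nonneg x), hnorm x hx]
      _ = r := by rw [← Finset.sum_mul, hu_sum, one_mul]
  have hdiff_bar : ‖b - bb‖ ≤ (∑ x ∈ S, |gibbsW S β x y - u x|) * r := by
    rw [hbar_eq, hb_def, gibbsBary]
    calc ‖∑ x ∈ S, gibbsW S β x y • x - ∑ x ∈ S, u x • x‖
        ≤ ∑ x ∈ S, (|gibbsW S β x y - u x| * ‖x‖ + |u x| * ‖x - x‖) :=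
          aux_pert S _ _ _ _
      _ = ∑ x ∈ S, |gibbsW S β x y - u x| * r := by
          refine Finset.sum_congr rfl fun x hx => ?_
          rw [sub_self, norm_zero, mul_zero, add_zero, hnorm x hx]
      _ = (∑ x ∈ S, |gibbsW S β x y - u x|) * r := by rw [Finset.sum_mul]
  -- inner product constancy on Sstar
  set a : ℝ := (‖y‖ ^ 2 + r ^ 2 - distS S y ^ 2) / 2 with ha_def
  have hinner : ∀ x ∈ Sstar S y, ⟪y, x⟫ = a := by
    intro x hx
    have h1 : ‖y - x‖ ^ 2 = ‖y‖ ^ 2 - 2 * ⟪y, x⟫ + ‖x‖ ^ 2 := norm_sub_sq_real y x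
    rw [hK_eq x hx, hnorm x (hK_sub hx)] at h1
    rw [ha_def]; linarith
  have hinner_bar : ⟪y, bb⟫ = a := by
    rw [hbb_def, baryStar, real_inner_smul_right, inner_sum, Finset.sum_congr rfl hinner,
      Finset.sum_const, nsmul_eq_mul]
    field_simp
  have hcent : ∑ x ∈ Sstar S y, (x - bb) = 0 := by
    rw [Finset.sum_sub_distrib, Finset.sum_const, hbb_def, baryStar,
      ← Nat.cast_smul_eq_nsmul ℝ, smul_smul, mul_inv_cancel₀ hk_ne, one_smul, sub_self]
  -- Astar rewrite
  have hT : ∀ x ∈ Sstar S y, ⟪bb, x - bb⟫ • (x - bb)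
      = ⟪y - x, x - bb⟫ • (x - bb) + (r ^ 2 - ‖bb‖ ^ 2) • (x - bb) := by
    intro x hx
    rw [← add_smul]
    congr 1
    have h1 := hinner x hx
    have hx2 : ⟪x, x⟫ = r ^ 2 := by
      rw [real_inner_self_eq_norm_sq, hnorm x (hK_sub hx)]
    have hb2 : ⟪bb, bb⟫ = ‖bb‖ ^ 2 := real_inner_self_eq_norm_sq _
    simp only [inner_sub_left, inner_sub_right]
    rw [real_inner_comm x bb] at *
    linarith
  have hAstar : Astar S y = ∑ x ∈ S, u x • (⟪y - x, x - bb⟫ • (x - bb)) := by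
    have step : ∑ x ∈ Sstar S y, ⟪bb, x - bb⟫ • (x - bb)
        = ∑ x ∈ Sstar S y, ⟪y - x, x - bb⟫ • (x - bb) := by
      rw [Finset.sum_congr rfl hT, Finset.sum_add_distrib, ← Finset.smul_sum, hcent,
        smul_zero, add_zero]
    have h : ∀ x, u x • (⟪y - x, x - bb⟫ • (x - bb))
        = (if x ∈ Sstar S y then (k:ℝ)⁻¹ • (⟪y - x, x - bb⟫ • (x - bb)) else 0) := by
      intro x; rw [hu_def]; dsimp only; rw [ite_smul, zero_smul]
    rw [Finset.sum_congr rfl fun x _ => h x, sum_ite_mem_subset hK_sub, Astar, ← hbb_def, step,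
      Finset.smul_sum]
  -- norm bounds
  have hyx : ∀ x ∈ S, ‖y - x‖ ≤ ‖y‖ + r := fun x hx => by
    calc ‖y - x‖ ≤ ‖y‖ + ‖x‖ := norm_sub_le y x
      _ = ‖y‖ + r := by rw [hnorm x hx]
  have hxb : ∀ x ∈ S, ‖x - b‖ ≤ 2 * r := fun x hx => by
    calc ‖x - b‖ ≤ ‖x‖ + ‖b‖ := norm_sub_le x b
      _ ≤ 2 * r := by rw [hnorm x hx]; linarith
  have hxbb : ∀ x ∈ S, ‖x - bb‖ ≤ 2 * r := fun x hx => by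
    calc ‖x - bb‖ ≤ ‖x‖ + ‖bb‖ := norm_sub_le x bb
      _ ≤ 2 * r := by rw [hnorm x hx]; linarith
  have hTb : ∀ x ∈ S, ‖⟪y - x, x - b⟫ • (x - b)‖ ≤ (‖y‖ + r) * (2 * r) * (2 * r) := by
    intro x hx
    rw [norm_smul, Real.norm_eq_abs]
    have h1 := abs_real_inner_le_norm (y - x) (x - b)
    have h2 := hyx x hx
    have h3 := hxb x hx
    have h4 := norm_nonneg (y - x)
    have h5 := norm_nonneg (x - b)
    have h6 := abs_nonneg (⟪y - x, x - b⟫ : ℝ)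
    have hyr : (0:ℝ) ≤ ‖y‖ + r := by linarith [norm_nonneg y]
    have h1' : |(⟪y - x, x - b⟫ : ℝ)| ≤ (‖y‖ + r) * (2 * r) :=
      h1.trans (mul_le_mul h2 h3 h5 hyr)
    exact mul_le_mul h1' h3 h5 (by positivity)
  have hTdiff : ∀ x ∈ S, ‖⟪y - x, x - b⟫ • (x - b) - ⟪y - x, x - bb⟫ • (x - bb)‖
      ≤ (‖y‖ + r) * ‖b - bb‖ * (2 * r) + (‖y‖ + r) * (2 * r) * ‖b - bb‖ := by
    intro x hx
    have hdecomp : ⟪y - x, x - b⟫ • (x - b) - ⟪y - x, x - bb⟫ • (x - bb)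
        = ⟪y - x, (x - b) - (x - bb)⟫ • (x - b) + ⟪y - x, x - bb⟫ • ((x - b) - (x - bb)) := by
      simp only [inner_sub_right]; module
    rw [hdecomp]
    have hnormd : ‖(x - b) - (x - bb)‖ = ‖b - bb‖ := by
      rw [show (x - b) - (x - bb) = -(b - bb) by abel, norm_neg]
    refine (norm_add_le _ _).trans ?_
    rw [norm_smul, norm_smul, Real.norm_eq_abs, Real.norm_eq_abs, hnormd]
    have h1 := (abs_real_inner_le_norm (y - x) ((x - b) - (x - bb))).trans_eq
      (by rw [hnormd])
    have h2 := abs_real_inner_le_norm (y - x) (x - bb)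
    have hy := hyx x hx
    have h3 := hxb x hx
    have h4 := hxbb x hx
    have h5 := norm_nonneg (y - x)
    have h6 := norm_nonneg (b - bb)
    have h7 := norm_nonneg (x - b)
    have h8 := norm_nonneg (x - bb)
    have h9 := abs_nonneg (⟪y - x, x - bb⟫ : ℝ)
    have h10 := abs_nonneg (⟪y - x, (x - b) - (x - bb)⟫ : ℝ)
    have hyr : (0:ℝ) ≤ ‖y‖ + r := by linarith [norm_nonneg y]
    refine add_le_add ?_ ?_
    · calc |(⟪y - x, (x - b) - (x - bb)⟫ : ℝ)| * ‖x - b‖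
          ≤ (‖y - x‖ * ‖b - bb‖) * (2 * r) := mul_le_mul h1 h3 h7 (mul_nonneg h5 h6)
        _ ≤ ((‖y‖ + r) * ‖b - bb‖) * (2 * r) :=
            mul_le_mul_of_nonneg_right (mul_le_mul_of_nonneg_right hy h6) (by linarith)
        _ = (‖y‖ + r) * ‖b - bb‖ * (2 * r) := by ring
    · calc |(⟪y - x, x - bb⟫ : ℝ)| * ‖b - bb‖
          ≤ ((‖y‖ + r) * (2 * r)) * ‖b - bb‖ :=
            mul_le_mul_of_nonneg_right (h2.trans (mul_le_mul hy h4 h8 hyr)) h6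
        _ = (‖y‖ + r) * (2 * r) * ‖b - bb‖ := by ring
  -- final assembly
  set δ := ∑ x ∈ S, |gibbsW S β x y - u x| with hδ_def
  have hδ_nonneg : 0 ≤ δ := Finset.sum_nonneg fun x _ => abs_nonneg _
  have hF : forceF S β y - β • Astar S y
      = β • (∑ x ∈ S, gibbsW S β x y • (⟪y - x, x - b⟫ • (x - b))
          - ∑ x ∈ S, u x • (⟪y - x, x - bb⟫ • (x - bb))) := by
    rw [forceF, hAstar, smul_sub]
    congr 2
    refine Finset.sum_congr rfl fun x _ => ?_
    rw [mul_smul]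
    rfl
  rw [hF, norm_smul, Real.norm_eq_abs, abs_of_pos hβ]
  have hmain : ‖∑ x ∈ S, gibbsW S β x y • (⟪y - x, x - b⟫ • (x - b))
      - ∑ x ∈ S, u x • (⟪y - x, x - bb⟫ • (x - bb))‖
      ≤ 16 * (N:ℝ) * r ^ 2 * (‖y‖ + r) * ε := by
    have step1 := aux_pert S (fun x => gibbsW S β x y) u
      (fun x => ⟪y - x, x - b⟫ • (x - b)) (fun x => ⟪y - x, x - bb⟫ • (x - bb))
    refine step1.trans ?_
    have step2 : ∑ x ∈ S, (|gibbsW S β x y - u x| * ‖⟪y - x, x - b⟫ • (x - b)‖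
        + |u x| * ‖⟪y - x, x - b⟫ • (x - b) - ⟪y - x, x - bb⟫ • (x - bb)‖)
        ≤ δ * ((‖y‖ + r) * (2 * r) * (2 * r))
          + 1 * ((‖y‖ + r) * ‖b - bb‖ * (2 * r) + (‖y‖ + r) * (2 * r) * ‖b - bb‖) := by
      rw [← hu_sum, hδ_def, Finset.sum_mul, Finset.sum_mul, ← Finset.sum_add_distrib]
      refine Finset.sum_le_sum fun x hx => ?_
      refine add_le_add ?_ ?_
      · exact mul_le_mul_of_nonneg_left (hTb x hx) (abs_nonneg _)
      · rw [abs_of_nonneg (hu_nonneg x)]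
        exact mul_le_mul_of_nonneg_left (hTdiff x hx) (hu_nonneg x)
    refine step2.trans ?_
    have hbbd : ‖b - bb‖ ≤ δ * r := by
      rw [hδ_def] at *
      calc ‖b - bb‖ ≤ (∑ x ∈ S, |gibbsW S β x y - u x|) * r := hdiff_bar
        _ = δ * r := by rw [hδ_def]
    have hδle : δ ≤ 2 * (N:ℝ) * ε := habs
    have hyr : 0 ≤ ‖y‖ + r := by positivity
    nlinarith [mul_le_mul_of_nonneg_left hbbd (by positivity : (0:ℝ) ≤ (‖y‖ + r) * (2 * r)),
      mul_le_mul_of_nonneg_left hδle (by positivity : (0:ℝ) ≤ (‖y‖ + r) * (2 * r) * (2 * r)),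
      mul_le_mul_of_nonneg_left hδle hyr, norm_nonneg y]
  calc β * ‖∑ x ∈ S, gibbsW S β x y • (⟪y - x, x - b⟫ • (x - b))
      - ∑ x ∈ S, u x • (⟪y - x, x - bb⟫ • (x - bb))‖
      ≤ β * (16 * (N:ℝ) * r ^ 2 * (‖y‖ + r) * ε) := mul_le_mul_of_nonneg_left hmain hβ.le
    _ = 16 * (N:ℝ) * r ^ 2 * β * (‖y‖ + r) * ε := by ring

end
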